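/- Let C_n be an odd cycle of length n ≥ 5. Then codeg(P_{C_n}) = 3, and hence ω(C_n) + 1 = codeg(P_{C_n}) < χ(C_n) + 1 = 4. -/

import Mathlib

open Finset Pointwise

noncomputable section

/-- The dilation `kP` of a set `P ⊆ ℝ^ι`. -/
def dilate {ι : Type*} (k : ℕ) (P : Set (ι → ℝ)) : Set (ι → ℝ) :=
  (fun x => (k : ℝ) • x) '' P

/-- A point of `ℝ^ι` is a lattice point if all its coordinates are integers. -/
def IsLatticePt {ι : Type*} (x : ι → ℝ) : Prop := ∀ i, ∃ m : ℤ, x i = m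

/-- The codegree of a (full-dimensional lattice) polytope `P ⊆ ℝ^ι`: the smallest
positive integer `k` such that the interior of `kP` contains a lattice point. -/
def codeg {ι : Type*} (P : Set (ι → ℝ)) : ℕ :=
  sInf {k | 0 < k ∧ ∃ x, IsLatticePt x ∧ x ∈ interior (dilate k P)}

/-- The stable set polytope of a simple graph: the convex hull of the indicator
vectors of the stable (independent) sets of `G`. -/
def stablePolytope {V : Type*} (G : SimpleGraph V) : Set (V → ℝ) :=
  convexHull ℝ {x | ∃ S : Set V, (∀ u ∈ S, ∀ v ∈ S, ¬ G.Adj u v) ∧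
    x = S.indicator (fun _ => (1 : ℝ))}

/-! ### Auxiliary lemmas -/

namespace Stmt17Aux

open Fin.NatCast

lemma fin_sub_val {n : ℕ} (a b : Fin n) :
    (a - b).val = if b.val ≤ a.val then a.val - b.val else n - (b.val - a.val) := by
  have ha := a.isLt; have hb := b.isLt
  rw [Fin.sub_def]
  split_ifs with h
  · have e : n - b.val + a.val = n + (a.val - b.val) := by omega
    simp only [e, Nat.add_mod_left]
    exact Nat.mod_eq_of_lt (by omega)
  · exact Nat.mod_eq_of_lt (by omega) |>.trans (by omega)

lemma fin_add_val {n : ℕ} (a b : Fin n) :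
    (a + b).val = if a.val + b.val < n then a.val + b.val else a.val + b.val - n := by
  have ha := a.isLt; have hb := b.isLt
  rw [Fin.add_def]
  split_ifs with h
  · exact Nat.mod_eq_of_lt h
  · show (a.val + b.val) % n = _
    rw [Nat.mod_eq_sub_mod (by omega)]
    exact Nat.mod_eq_of_lt (by omega)

lemma adj_iff {n : ℕ} (hn : 5 ≤ n) {a b : Fin n} :
    (SimpleGraph.cycleGraph n).Adj a b ↔
      (a.val + 1 = b.val ∨ b.val + 1 = a.val ∨ (a.val = 0 ∧ b.val = n - 1) ∨
        (b.val = 0 ∧ a.val = n - 1)) := by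
  have ha := a.isLt; have hb := b.isLt
  rw [SimpleGraph.cycleGraph_adj', fin_sub_val, fin_sub_val]
  split_ifs <;> omega

/-! #### Clique number -/

lemma clique_eq_two {n : ℕ} (hn : 5 ≤ n) : (SimpleGraph.cycleGraph n).cliqueNum = 2 := by
  haveI : NeZero n := ⟨by omega⟩
  have hub : ∀ m ∈ {m | ∃ s, (SimpleGraph.cycleGraph n).IsNClique m s}, m ≤ 2 := by
    rintro m ⟨s, hs⟩
    by_contra h
    have hcard : 2 < s.card := by rw [hs.2]; omega
    obtain ⟨a, b, c, ha, hb, hc, hab, hac, hbc⟩ := Finset.two_lt_card_iff.mp hcard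
    have h1 := (adj_iff hn).mp (hs.1 ha hb hab)
    have h2 := (adj_iff hn).mp (hs.1 ha hc hac)
    have h3 := (adj_iff hn).mp (hs.1 hb hc hbc)
    have e1 : a.val ≠ b.val := fun e => hab (Fin.ext e)
    have e2 : a.val ≠ c.val := fun e => hac (Fin.ext e)
    have e3 : b.val ≠ c.val := fun e => hbc (Fin.ext e)
    omega
  refine le_antisymm (csSup_le ⟨0, ∅, by simp [SimpleGraph.isNClique_empty]⟩ hub) ?_
  refine le_csSup ⟨2, hub⟩ ?_
  refine ⟨{0, 1}, ?_, ?_⟩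
  · have h01 : (SimpleGraph.cycleGraph n).Adj 0 1 := by
      rw [adj_iff hn]
      left
      simp [Fin.val_one', Nat.mod_eq_of_lt (by omega : 1 < n)]
    intro u hu v hv huv
    simp only [Finset.coe_insert, Set.mem_insert_iff, Finset.coe_singleton,
      Set.mem_singleton_iff] at hu hv
    rcases hu with rfl | rfl <;> rcases hv with rfl | rfl <;> simp_all [h01.symm]
  · refine Finset.card_pair ?_
    intro h
    have : (0 : Fin n).val = (1 : Fin n).val := by rw [h]
    simp [Fin.val_one', Nat.mod_eq_of_lt (by omega : 1 < n)] at this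

/-! #### Chromatic number -/

lemma colorable3 {n : ℕ} (hn : 5 ≤ n) : (SimpleGraph.cycleGraph n).Colorable 3 := by
  rw [SimpleGraph.colorable_iff_exists_bdd_nat_coloring]
  refine ⟨SimpleGraph.Coloring.mk (fun v => if v.val = n - 1 then 2 else v.val % 2) ?_, ?_⟩
  · intro u v huv
    rw [adj_iff hn] at huv
    have hu := u.isLt; have hv := v.isLt
    split_ifs <;> omega
  · intro v
    show (if v.val = n - 1 then 2 else v.val % 2) < 3
    split_ifs <;> omega

lemma notcolorable2 {n : ℕ} (hn : 5 ≤ n) (hodd : Odd n) :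
    ¬ (SimpleGraph.cycleGraph n).Colorable 2 := by
  intro h
  rw [SimpleGraph.colorable_iff_exists_bdd_nat_coloring] at h
  obtain ⟨C, hC⟩ := h
  haveI : NeZero n := ⟨by omega⟩
  have key : ∀ m : ℕ, C ((m : Fin n)) = if m % 2 = 0 then C 0 else 1 - C 0 := by
    intro m
    induction m with
    | zero => simp
    | succ m ih =>
      have hadj : (SimpleGraph.cycleGraph n).Adj ((m : Fin n)) (((m+1 : ℕ) : Fin n)) := by
        have hv1 : ((m : Fin n)).val = m % n := Fin.val_natCast m n
        have hv2 : (((m+1 : ℕ) : Fin n)).val = (m+1) % n := Fin.val_natCast (m+1) n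
        rw [adj_iff hn, hv1, hv2]
        have h1 : m % n < n := Nat.mod_lt _ (by omega)
        have e1 : (m + 1) % n = (m % n + 1) % n := by
          conv_lhs => rw [Nat.add_mod, Nat.mod_eq_of_lt (show 1 < n by omega)]
        rcases Nat.lt_or_ge (m % n) (n-1) with h | h
        · left
          rw [e1]
          exact (Nat.mod_eq_of_lt (by omega)).symm
        · right; right; right
          have hm : m % n = n - 1 := by omega
          refine ⟨?_, hm⟩
          rw [e1, hm]
          have e2 : n - 1 + 1 = n := by omega
          rw [e2, Nat.mod_self]
      have hne := C.valid hadj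
      have b1 := hC ((m : Fin n)); have b2 := hC (((m+1:ℕ) : Fin n))
      have b0 := hC (0 : Fin n)
      rw [ih] at hne
      split_ifs at hne ⊢ <;> omega
  have := key n
  rw [Fin.natCast_self] at this
  have b0 := hC (0 : Fin n)
  obtain ⟨t, ht⟩ := hodd
  split_ifs at this <;> omega

lemma chrom_eq_three {n : ℕ} (hn : 5 ≤ n) (hodd : Odd n) :
    (SimpleGraph.cycleGraph n).chromaticNumber = 3 := by
  refine le_antisymm ?_ ?_
  · exact_mod_cast SimpleGraph.chromaticNumber_le_iff_colorable.mpr (colorable3 hn)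
  · by_contra h
    push_neg at h
    have : (SimpleGraph.cycleGraph n).chromaticNumber ≤ (2 : ℕ) := by
      exact_mod_cast Order.le_of_lt_add_one (by exact_mod_cast h)
    exact notcolorable2 hn hodd (SimpleGraph.chromaticNumber_le_iff_colorable.mp this)

/-! #### Polytope facts -/

lemma P_nonneg {V : Type*} {G : SimpleGraph V} {x : V → ℝ}
    (hx : x ∈ stablePolytope G) (i : V) : 0 ≤ x i := by
  have hsub : stablePolytope G ⊆ {y : V → ℝ | 0 ≤ y i} := by
    refine convexHull_min ?_ (convex_halfSpace_ge (⟨fun a b => rfl, fun c a => rfl⟩ :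
      IsLinearMap ℝ (fun y : V → ℝ => y i)) 0)
    rintro y ⟨S, _, rfl⟩
    by_cases h : i ∈ S <;> simp [Set.indicator_apply, h]
  exact hsub hx

lemma P_edge {V : Type*} {G : SimpleGraph V} {x : V → ℝ}
    (hx : x ∈ stablePolytope G) {i j : V} (hij : G.Adj i j) : x i + x j ≤ 1 := by
  have hsub : stablePolytope G ⊆ {y : V → ℝ | y i + y j ≤ 1} := by
    refine convexHull_min ?_ (convex_halfSpace_le (⟨fun a b => by simp; ring,
      fun c a => by simp; ring⟩ : IsLinearMap ℝ (fun y : V → ℝ => y i + y j)) 1)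
    rintro y ⟨S, hS, rfl⟩
    by_cases h1 : i ∈ S <;> by_cases h2 : j ∈ S <;>
      simp [Set.indicator_apply, h1, h2]
    exact absurd hij (hS i h1 j h2)
  exact hsub hx

lemma simplex_subset_P {V : Type*} [Fintype V] {G : SimpleGraph V} (x : V → ℝ)
    (hx : ∀ i, 0 ≤ x i) (hs : ∑ i, x i ≤ 1) : x ∈ stablePolytope G := by
  classical
  have hconv : Convex ℝ (stablePolytope G) := convex_convexHull ℝ _
  have hzero : (0 : V → ℝ) ∈ stablePolytope G :=
    subset_convexHull ℝ _ ⟨∅, by simp, by funext i; simp⟩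
  have hsingle : ∀ i : V, Set.indicator {i} (fun _ => (1:ℝ)) ∈ stablePolytope G := by
    intro i
    refine subset_convexHull ℝ _ ⟨{i}, ?_, rfl⟩
    rintro u rfl v rfl
    exact fun h => G.irrefl h
  have := hconv.sum_mem (t := (Finset.univ : Finset (Option V)))
    (w := fun o => Option.elim o (1 - ∑ i, x i) x)
    (z := fun o => Option.elim o 0 (fun i => Set.indicator {i} (fun _ => (1:ℝ))))
    (by rintro (_ | i) _
        · simpa using by linarith
        · exact hx i)
    (by rw [Fintype.sum_option]; simp)
    (by rintro (_ | i) _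
        · exact hzero
        · exact hsingle i)
  convert this using 1
  funext t
  rw [Fintype.sum_option]
  simp only [Option.elim, Finset.sum_apply, Pi.add_apply, Pi.smul_apply, smul_eq_mul,
    Pi.zero_apply, mul_zero, zero_add, smul_zero]
  rw [Finset.sum_congr rfl (fun i _ => show x i * Set.indicator {i} (fun _ => (1:ℝ)) t
      = if t = i then x i else 0 by
    by_cases h : t = i <;> simp [Set.indicator_apply, h])]
  simp

lemma u_mem_interior {n : ℕ} (hn : 5 ≤ n) :
    (fun _ : Fin n => 1/(2*(n:ℝ))) ∈
      interior (stablePolytope (SimpleGraph.cycleGraph n)) := by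
  have hn0 : (0:ℝ) < n := by exact_mod_cast (by omega : 0 < n)
  rw [mem_interior]
  refine ⟨Metric.ball _ (1/(2*n)), ?_, Metric.isOpen_ball, Metric.mem_ball_self (by positivity)⟩
  intro y hy
  rw [Metric.mem_ball, dist_pi_lt_iff (by positivity)] at hy
  have hcoord : ∀ i : Fin n, |y i - 1/(2*(n:ℝ))| < 1/(2*(n:ℝ)) := by
    intro i
    have := hy i
    rwa [Real.dist_eq] at this
  apply simplex_subset_P
  · intro i
    have := abs_lt.mp (hcoord i)
    linarith [this.1]
  · have hle : ∀ i : Fin n, y i ≤ 1/(n:ℝ) := by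
      intro i
      have := abs_lt.mp (hcoord i)
      have h2 := this.2
      have he : 1/(2*(n:ℝ)) + 1/(2*(n:ℝ)) = 1/(n:ℝ) := by
        rw [← add_div, div_eq_div_iff (by positivity) (by positivity)]
        ring
      linarith
    calc ∑ i, y i ≤ ∑ _i : Fin n, 1/(n:ℝ) := Finset.sum_le_sum (fun i _ => hle i)
    _ = 1 := by
      rw [Finset.sum_const, Finset.card_univ, Fintype.card_fin, nsmul_eq_mul]
      field_simp

def rotSet (n k : ℕ) [NeZero n] (j : Fin n) : Set (Fin n) :=
  Set.range (fun m : Fin k => j + (↑(2 * m.val) : Fin n))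

lemma rotSet_stable {n k : ℕ} [NeZero n] (hn : 5 ≤ n) (hk : n = 2*k+1) (j : Fin n) :
    ∀ u ∈ rotSet n k j, ∀ v ∈ rotSet n k j, ¬ (SimpleGraph.cycleGraph n).Adj u v := by
  rintro u ⟨m1, rfl⟩ v ⟨m2, rfl⟩ hadj
  have hm1 := m1.isLt; have hm2 := m2.isLt; have hj := j.isLt
  have h1 : (↑(2*m1.val) : Fin n).val = 2*m1.val := Fin.val_cast_of_lt (by omega)
  have h2 : (↑(2*m2.val) : Fin n).val = 2*m2.val := Fin.val_cast_of_lt (by omega)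
  rw [adj_iff hn, fin_add_val, fin_add_val, h1, h2] at hadj
  split_ifs at hadj <;> omega

lemma rot_filter {n k : ℕ} [NeZero n] (hn : 5 ≤ n) (hk : n = 2*k+1) (i : Fin n)
    [DecidablePred fun j : Fin n => i ∈ rotSet n k j] :
    (univ.filter fun j : Fin n => i ∈ rotSet n k j).card = k := by
  have himg : (univ.filter fun j : Fin n => i ∈ rotSet n k j)
      = univ.image (fun m : Fin k => i - (↑(2*m.val) : Fin n)) := by
    ext j
    simp only [mem_filter, mem_univ, true_and, mem_image, rotSet, Set.mem_range]
    constructor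
    · rintro ⟨m, hm⟩
      exact ⟨m, (eq_sub_of_add_eq hm).symm⟩
    · rintro ⟨m, rfl⟩
      exact ⟨m, sub_add_cancel i _⟩
  rw [himg, Finset.card_image_of_injective _ ?_, Finset.card_univ, Fintype.card_fin]
  intro m1 m2 h
  have hm1 := m1.isLt; have hm2 := m2.isLt
  have hc : (↑(2*m1.val) : Fin n) = (↑(2*m2.val) : Fin n) := sub_right_injective h
  have h1 : (↑(2*m1.val) : Fin n).val = 2*m1.val := Fin.val_cast_of_lt (by omega)
  have h2 : (↑(2*m2.val) : Fin n).val = 2*m2.val := Fin.val_cast_of_lt (by omega)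
  have : (2*m1.val) = 2*m2.val := by rw [← h1, ← h2, hc]
  exact Fin.ext (by omega)

lemma v_mem {n k : ℕ} (hn : 5 ≤ n) (hk : n = 2*k+1) :
    (fun _ : Fin n => (k:ℝ)/n) ∈ stablePolytope (SimpleGraph.cycleGraph n) := by
  classical
  haveI : NeZero n := ⟨by omega⟩
  have hn0 : (0:ℝ) < n := by exact_mod_cast (by omega : 0 < n)
  have hconv : Convex ℝ (stablePolytope (SimpleGraph.cycleGraph n)) := convex_convexHull ℝ _
  have := hconv.sum_mem (t := (univ : Finset (Fin n)))
    (w := fun _ => (1:ℝ)/n)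
    (z := fun j => (rotSet n k j).indicator (fun _ => (1:ℝ)))
    (fun _ _ => by positivity)
    (by rw [Finset.sum_const, Finset.card_univ, Fintype.card_fin, nsmul_eq_mul]; field_simp)
    (fun j _ => subset_convexHull ℝ _ ⟨rotSet n k j, rotSet_stable hn hk j, rfl⟩)
  convert this using 1
  funext i
  simp only [Finset.sum_apply, Pi.smul_apply, smul_eq_mul]
  rw [Finset.sum_congr rfl (fun j _ => show (1:ℝ)/n * (rotSet n k j).indicator (fun _ => (1:ℝ)) i
      = (1/n) * (if i ∈ rotSet n k j then 1 else 0) by rw [Set.indicator_apply])]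
  rw [← Finset.mul_sum, Finset.sum_boole, rot_filter hn hk i]
  field_simp

lemma one_third_mem_interior {n k : ℕ} (hn : 5 ≤ n) (hk : n = 2*k+1) :
    (fun _ : Fin n => (1:ℝ)/3) ∈
      interior (stablePolytope (SimpleGraph.cycleGraph n)) := by
  have hk2 : 2 ≤ k := by omega
  have hkR : (2:ℝ) ≤ k := by exact_mod_cast hk2
  have hnR : (n:ℝ) = 2*k+1 := by exact_mod_cast hk
  have hconv : Convex ℝ (stablePolytope (SimpleGraph.cycleGraph n)) := convex_convexHull ℝ _
  have ha : (0:ℝ) < (2*k-2)/(6*k-3) := by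
    apply div_pos <;> linarith
  have hb : (0:ℝ) ≤ (4*k-1)/(6*k-3) := by
    apply div_nonneg <;> linarith
  have hab : (2*(k:ℝ)-2)/(6*k-3) + (4*k-1)/(6*k-3) = 1 := by
    have d1 : (6*(k:ℝ)-3) ≠ 0 := by linarith
    rw [← add_div, div_eq_one_iff_eq d1]
    ring
  have hcomb := hconv.combo_interior_closure_mem_interior
    (u_mem_interior hn) (subset_closure (v_mem hn hk)) ha hb hab
  convert hcomb using 1
  funext i
  simp only [Pi.add_apply, Pi.smul_apply, smul_eq_mul]
  rw [hnR]
  have d1 : (6*(k:ℝ)-3) ≠ 0 := by linarith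
  have d2 : (2*(k:ℝ)+1) ≠ 0 := by linarith
  field_simp
  rw [eq_div_iff (by linarith)]
  ring

lemma dilate_eq {ι : Type*} (m : ℕ) (P : Set (ι → ℝ)) : dilate m P = (m:ℝ) • P := by
  rw [dilate, Set.image_smul]

lemma three_in_set {n k : ℕ} (hn : 5 ≤ n) (hk : n = 2*k+1) :
    3 ∈ {m | 0 < m ∧ ∃ x, IsLatticePt x ∧
      x ∈ interior (dilate m (stablePolytope (SimpleGraph.cycleGraph n)))} := by
  refine ⟨by norm_num, (fun _ : Fin n => (1:ℝ)), fun i => ⟨1, by norm_num⟩, ?_⟩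
  rw [dilate_eq, interior_smul₀ (by norm_num : ((3:ℕ):ℝ) ≠ 0)]
  refine ⟨(fun _ : Fin n => (1:ℝ)/3), one_third_mem_interior hn hk, ?_⟩
  funext i
  simp only [Pi.smul_apply, smul_eq_mul]
  norm_num

lemma lb_three {n : ℕ} (hn : 5 ≤ n) :
    ∀ m ∈ {m | 0 < m ∧ ∃ x, IsLatticePt x ∧
      x ∈ interior (dilate m (stablePolytope (SimpleGraph.cycleGraph n)))}, 3 ≤ m := by
  haveI : NeZero n := ⟨by omega⟩
  rintro m ⟨hm, x, hlat, hx⟩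
  have hmR : (0:ℝ) < m := by exact_mod_cast hm
  rw [dilate_eq, interior_smul₀ (by positivity : ((m:ℕ):ℝ) ≠ 0)] at hx
  obtain ⟨y, hy, hxy⟩ := hx
  obtain ⟨ε, hε, hball⟩ := Metric.isOpen_iff.mp isOpen_interior y hy
  have hPy : ∀ z ∈ Metric.ball y ε, z ∈ stablePolytope (SimpleGraph.cycleGraph n) :=
    fun z hz => interior_subset (hball hz)
  have adj01 : (SimpleGraph.cycleGraph n).Adj 0 1 := by
    rw [adj_iff hn]
    left
    simp [Fin.val_one', Nat.mod_eq_of_lt (by omega : 1 < n)]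
  -- strict edge inequality
  have hy01 : y 0 + y 1 < 1 := by
    have hz : (fun i : Fin n => if i = 0 ∨ i = 1 then y i + ε/2 else y i) ∈ Metric.ball y ε := by
      rw [Metric.mem_ball, dist_pi_lt_iff hε]
      intro i
      simp only [Real.dist_eq]
      split_ifs with h
      · rw [show y i + ε/2 - y i = ε/2 by ring, abs_of_pos (half_pos hε)]
        linarith
      · simpa using hε
    have := P_edge (hPy _ hz) adj01
    simp only [eq_self_iff_true, true_or, or_true, if_true] at this
    linarith
  -- strict positivity at 0 and 1
  have hpos : ∀ t : Fin n, 0 < y t := by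
    intro t
    have hz : (fun i : Fin n => if i = t then y i - ε/2 else y i) ∈ Metric.ball y ε := by
      rw [Metric.mem_ball, dist_pi_lt_iff hε]
      intro i
      simp only [Real.dist_eq]
      split_ifs with h
      · rw [show y i - ε/2 - y i = -(ε/2) by ring, abs_neg, abs_of_pos (half_pos hε)]
        linarith
      · simpa using hε
    have := P_nonneg (hPy _ hz) t
    simp only [eq_self_iff_true, if_true] at this
    linarith
  -- integrality
  obtain ⟨m0, hm0⟩ := hlat 0
  obtain ⟨m1, hm1⟩ := hlat 1
  have hx0 : x 0 = m * y 0 := by rw [← hxy]; rfl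
  have hx1 : x 1 = m * y 1 := by rw [← hxy]; rfl
  have h0 : (1:ℝ) ≤ x 0 := by
    rw [hm0]
    have : (0:ℝ) < m0 := by
      rw [← hm0, hx0]
      exact mul_pos hmR (hpos 0)
    exact_mod_cast (by exact_mod_cast this : 0 < m0)
  have h1 : (1:ℝ) ≤ x 1 := by
    rw [hm1]
    have : (0:ℝ) < m1 := by
      rw [← hm1, hx1]
      exact mul_pos hmR (hpos 1)
    exact_mod_cast (by exact_mod_cast this : 0 < m1)
  have : (2:ℝ) < m := by
    have hsum : x 0 + x 1 < m := by
      rw [hx0, hx1, ← mul_add]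
      calc (m:ℝ) * (y 0 + y 1) < m * 1 := mul_lt_mul_of_pos_left hy01 hmR
        _ = m := mul_one _
    linarith
  exact_mod_cast (by exact_mod_cast this : (2:ℕ) < m)

lemma codeg_eq_three {n k : ℕ} (hn : 5 ≤ n) (hk : n = 2*k+1) :
    codeg (stablePolytope (SimpleGraph.cycleGraph n)) = 3 := by
  have h3 := three_in_set hn hk
  exact le_antisymm (Nat.sInf_le h3) (le_csInf ⟨3, h3⟩ (lb_three hn))

end Stmt17Aux

/-- For an odd cycle `C_n` with `n ≥ 5`: `codeg(P_{C_n}) = 3`, and hence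
`ω(C_n) + 1 = codeg(P_{C_n}) < χ(C_n) + 1 = 4`. -/
theorem stmt17 (n : ℕ) (hn : 5 ≤ n) (hodd : Odd n) :
    codeg (stablePolytope (SimpleGraph.cycleGraph n)) = 3 ∧
    (SimpleGraph.cycleGraph n).cliqueNum + 1 = 3 ∧
    (SimpleGraph.cycleGraph n).chromaticNumber + 1 = 4 := by
  obtain ⟨t, ht⟩ := hodd
  have hk : n = 2*t+1 := by omega
  refine ⟨Stmt17Aux.codeg_eq_three hn hk, ?_, ?_⟩
  · rw [Stmt17Aux.clique_eq_two hn]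
  · rw [Stmt17Aux.chrom_eq_three hn ⟨t, ht⟩]
    rfl
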